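/- arXiv:1303.4542 — 4 statements merged into one kernel-verified Lean document; each statement's English description precedes it below -/
import Mathlib

section
/- Let (y_n) be defined by y_{n+1} = a·y_n·log(1/y_n) with 0 < a < 1 and y₀ ∈ [exp(−1/a), exp(−1)]. Then (y_n) is decreasing and converges to exp(−1/a); moreover, with b = log(1/min{y₀, a}), for all n ∈ ℕ one has y_n ≤ (a·b)^n · y₀ · n!. -/
open Real Filter

/-- `x ↦ -(x log x)` is monotone on `[0, e⁻¹]`. -/
lemma neg_mul_log_mono : StrictMonoOn (fun x : ℝ => -(x * Real.log x))
    (Set.Icc 0 (Real.exp (-1))) := by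
  apply strictMonoOn_of_deriv_pos (convex_Icc _ _)
  · exact Real.continuous_mul_log.neg.continuousOn
  · intro x hx
    rw [interior_Icc] at hx
    have hx0 : x ≠ 0 := ne_of_gt hx.1
    have hder : HasDerivAt (fun x : ℝ => -(x * Real.log x)) (-(Real.log x + 1)) x :=
      (Real.hasDerivAt_mul_log hx0).neg
    rw [hder.deriv]
    have hlt : Real.log x < -1 := by
      have := Real.log_lt_log hx.1 hx.2
      rwa [Real.log_exp] at this
    linarith

/-- the sequence `y_{n+1} = a·y_n·log(1/y_n)` with `0 < a < 1` and
`y₀ ∈ [exp(−1/a), exp(−1)]` is decreasing and converges to `exp(−1/a)`; moreover,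
with `b = log(1/min{y₀, a})`, for all `n` one has `y_n ≤ (ab)^n·y₀·n!`. -/
theorem y_sequence (a : ℝ) (ha0 : 0 < a) (ha1 : a < 1)
    (y : ℕ → ℝ)
    (hy0l : Real.exp (-1 / a) ≤ y 0) (hy0u : y 0 ≤ Real.exp (-1))
    (hrec : ∀ n, y (n + 1) = a * y n * Real.log (1 / y n))
    (b : ℝ) (hb : b = Real.log (1 / min (y 0) a)) :
    (∀ n, y (n + 1) ≤ y n) ∧
      Filter.Tendsto y Filter.atTop (nhds (Real.exp (-1 / a))) ∧
      ∀ n : ℕ, y n ≤ (a * b) ^ n * y 0 * n.factorial := by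
  have ha1' : 1 ≤ 1 / a := by
    rw [le_div_iff₀ ha0]; linarith
  have hrec' : ∀ n, y (n + 1) = -(a * (y n * Real.log (y n))) := by
    intro n
    rw [hrec n, one_div, Real.log_inv]; ring
  -- invariant
  have hinv : ∀ n, Real.exp (-1 / a) ≤ y n ∧ y n ≤ Real.exp (-1) := by
    intro n
    induction n with
    | zero => exact ⟨hy0l, hy0u⟩
    | succ n ih =>
      obtain ⟨hl, hu⟩ := ih
      have hyn0 : 0 < y n := lt_of_lt_of_le (Real.exp_pos _) hl
      have hloga : -(1 / a) ≤ Real.log (y n) := by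
        have := Real.log_le_log (Real.exp_pos _) hl
        rwa [Real.log_exp, neg_div] at this
      have hlog1 : Real.log (y n) ≤ -1 := by
        have := Real.log_le_log hyn0 hu
        rwa [Real.log_exp] at this
      constructor
      · -- lower bound via monotonicity
        have hmem1 : Real.exp (-1 / a) ∈ Set.Icc (0 : ℝ) (Real.exp (-1)) := by
          constructor
          · exact (Real.exp_pos _).le
          · apply Real.exp_le_exp.mpr
            rw [neg_div]
            linarith
        have hmem2 : y n ∈ Set.Icc (0 : ℝ) (Real.exp (-1)) := ⟨hyn0.le, hu⟩
        have hmono := neg_mul_log_mono.monotoneOn hmem1 hmem2 hl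
        rw [Real.log_exp] at hmono
        rw [hrec' n]
        have : a * (Real.exp (-1 / a) * (1 / a)) ≤ a * (-(y n * Real.log (y n))) := by
          apply mul_le_mul_of_nonneg_left _ ha0.le
          calc Real.exp (-1 / a) * (1 / a) = -(Real.exp (-1 / a) * (-1 / a)) := by ring_nf
          _ ≤ -(y n * Real.log (y n)) := hmono
        calc Real.exp (-1 / a) = a * (Real.exp (-1 / a) * (1 / a)) := by
              field_simp
        _ ≤ a * (-(y n * Real.log (y n))) := this
        _ = -(a * (y n * Real.log (y n))) := by ring
      · -- upper bound: y (n+1) ≤ y n ≤ e⁻¹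
        rw [hrec' n]
        have hnl : -(Real.log (y n)) ≤ 1 / a := by linarith
        calc -(a * (y n * Real.log (y n))) = (a * y n) * (-(Real.log (y n))) := by ring
        _ ≤ (a * y n) * (1 / a) := mul_le_mul_of_nonneg_left hnl (by positivity)
        _ = y n := by field_simp
        _ ≤ Real.exp (-1) := hu
  have hdec : ∀ n, y (n + 1) ≤ y n := by
    intro n
    obtain ⟨hl, hu⟩ := hinv n
    have hyn0 : 0 < y n := lt_of_lt_of_le (Real.exp_pos _) hl
    have hloga : -(1 / a) ≤ Real.log (y n) := by
      have := Real.log_le_log (Real.exp_pos _) hl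
      rwa [Real.log_exp, neg_div] at this
    rw [hrec' n]
    have hnl : -(Real.log (y n)) ≤ 1 / a := by linarith
    calc -(a * (y n * Real.log (y n))) = (a * y n) * (-(Real.log (y n))) := by ring
    _ ≤ (a * y n) * (1 / a) := mul_le_mul_of_nonneg_left hnl (by positivity)
    _ = y n := by field_simp
  -- convergence
  have hanti : Antitone y := antitone_nat_of_succ_le hdec
  have hbdd : BddBelow (Set.range y) := by
    refine ⟨Real.exp (-1 / a), ?_⟩
    rintro x ⟨n, rfl⟩
    exact (hinv n).1
  have htend : Tendsto y atTop (nhds (⨅ n, y n)) := tendsto_atTop_ciInf hanti hbdd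
  set L := ⨅ n, y n with hLdef
  have hLl : Real.exp (-1 / a) ≤ L := le_ciInf fun n => (hinv n).1
  have hL0 : 0 < L := lt_of_lt_of_le (Real.exp_pos _) hLl
  have htend1 : Tendsto (fun n => y (n + 1)) atTop (nhds L) :=
    htend.comp (tendsto_add_atTop_nat 1)
  have htend2 : Tendsto (fun n => -(a * (y n * Real.log (y n)))) atTop
      (nhds (-(a * (L * Real.log L)))) := by
    apply Filter.Tendsto.neg
    apply Filter.Tendsto.const_mul
    exact htend.mul ((Real.continuousAt_log hL0.ne').tendsto.comp htend)
  have heq : L = -(a * (L * Real.log L)) := by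
    apply tendsto_nhds_unique htend1
    have : (fun n => y (n + 1)) = fun n => -(a * (y n * Real.log (y n))) := by
      funext n; exact hrec' n
    rw [this]
    exact htend2
  have hlogL : Real.log L = -1 / a := by
    have h1 : L * (a * Real.log L) = L * (-1) := by nlinarith
    have h2 : a * Real.log L = -1 := mul_left_cancel₀ hL0.ne' h1
    field_simp
    linarith
  have hLeq : L = Real.exp (-1 / a) := by
    rw [← Real.exp_log hL0, hlogL]
  refine ⟨hdec, by rwa [hLeq] at htend, ?_⟩
  -- the factorial bound
  set m := min (y 0) a with hmdef
  have hm0 : 0 < m := lt_min (lt_of_lt_of_le (Real.exp_pos _) hy0l) ha0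
  have hmb : b = -Real.log m := by rw [hb, one_div, Real.log_inv]
  have hb0 : 0 < b := by
    rw [hmb]
    have : Real.log m < 0 := Real.log_neg hm0 (lt_of_le_of_lt (min_le_right _ _) ha1)
    linarith
  have hma : m ≤ a := min_le_right _ _
  have hlog1 : ∀ n, 1 ≤ Real.log (1 / y n) := by
    intro n
    obtain ⟨hl, hu⟩ := hinv n
    have hyn0 : 0 < y n := lt_of_lt_of_le (Real.exp_pos _) hl
    rw [one_div, Real.log_inv]
    have := Real.log_le_log hyn0 hu
    rw [Real.log_exp] at this
    linarith
  have hylow : ∀ n, m ^ (n + 1) ≤ y n := by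
    intro n
    induction n with
    | zero => rw [pow_one]; exact min_le_left (y 0) a
    | succ n ih =>
      have hyn0 : 0 < y n := lt_of_lt_of_le (Real.exp_pos _) (hinv n).1
      calc m ^ (n + 2) = m * m ^ (n + 1) := by ring
      _ ≤ a * y n := mul_le_mul hma ih (pow_nonneg hm0.le _) ha0.le
      _ = a * y n * 1 := by ring
      _ ≤ a * y n * Real.log (1 / y n) :=
          mul_le_mul_of_nonneg_left (hlog1 n) (by positivity)
      _ = y (n + 1) := (hrec n).symm
  intro n
  induction n with
  | zero => simp
  | succ n ih =>
    have hyn0 : 0 < y n := lt_of_lt_of_le (Real.exp_pos _) (hinv n).1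
    have hlogle : Real.log (1 / y n) ≤ (n + 1) * b := by
      rw [one_div, Real.log_inv]
      have h1 : Real.log (m ^ (n + 1)) ≤ Real.log (y n) :=
        Real.log_le_log (pow_pos hm0 _) (hylow n)
      rw [Real.log_pow] at h1
      rw [hmb]
      push_cast at h1 ⊢
      linarith
    have hy00 : 0 < y 0 := lt_of_lt_of_le (Real.exp_pos _) hy0l
    have hRHS : (0 : ℝ) ≤ (a * b) ^ n * y 0 * n.factorial := by positivity
    have hstep : y (n + 1) ≤ a * ((a * b) ^ n * y 0 * n.factorial) * ((n + 1) * b) := by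
      rw [hrec n]
      apply mul_le_mul
      · exact mul_le_mul_of_nonneg_left ih ha0.le
      · exact hlogle
      · linarith [hlog1 n]
      · positivity
    calc y (n + 1) ≤ a * ((a * b) ^ n * y 0 * n.factorial) * ((n + 1) * b) := hstep
    _ = (a * b) ^ (n + 1) * y 0 * (n + 1).factorial := by
        rw [Nat.factorial_succ]
        push_cast
        ring
end

section
/- Let G be a simple graph with N vertices and l edges, let λ₁ be the largest eigenvalue of its adjacency matrix, let X₁,…,X_N be i.i.d. random variables with P(X_i = ±1) = 1/2 assigned to the vertices, and let S = Σ_{{i,j}∈E} X_i X_j. Then for all 0 ≤ t < 1/λ₁: E[e^{−tS}] ≤ E[e^{tS}] ≤ exp(l·t²/(2(1 − λ₁·t))). -/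
open scoped BigOperators
open Finset Matrix



/-- Sum over functions `Fin (n+1) → Bool` splits via `Fin.cons`. -/
lemma sum_pi_succ {n : ℕ} {M : Type*} [AddCommMonoid M] (f : (Fin (n + 1) → Bool) → M) :
    ∑ b, f b = ∑ s : Bool, ∑ b : Fin n → Bool, f (Fin.cons s b) := by
  rw [← Equiv.sum_comp (Fin.consEquiv fun _ : Fin (n + 1) => Bool) f, Fintype.sum_prod_type]
  rfl

/-- signs product positivity -/
lemma sum_prod_signs_nonneg {V ι : Type*} [Fintype V] [DecidableEq V] [Fintype ι]
    [DecidableEq ι] (q : ι → V) :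
    0 ≤ ∑ b : V → Bool, ∏ r : ι, (if b (q r) then (1 : ℝ) else -1) := by
  have h1 : ∀ b : V → Bool, (∏ r : ι, (if b (q r) then (1 : ℝ) else -1))
      = ∏ j : V, (if b j then (1 : ℝ) else -1) ^ (Fintype.card {r // q r = j}) := by
    intro b
    rw [← Fintype.prod_fiberwise q (fun r => (if b (q r) then (1 : ℝ) else -1))]
    refine Finset.prod_congr rfl fun j _ => ?_
    rw [Finset.prod_congr rfl (g := fun _ => if b j then (1:ℝ) else -1)
      (fun r _ => by rw [r.2]), Finset.prod_const, Finset.card_univ]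
  simp_rw [h1]
  rw [← Fintype.prod_sum fun (j : V) (s : Bool) => (if s then (1:ℝ) else -1) ^ (Fintype.card {r // q r = j})]
  refine Finset.prod_nonneg fun j _ => ?_
  rcases Nat.even_or_odd (Fintype.card {r // q r = j}) with he | ho
  · simp [he.neg_one_pow]
  · simp [ho.neg_one_pow]
/-- All "moments" of the quadratic form are nonnegative. -/
lemma moments_nonneg {N : ℕ} (A : Matrix (Fin N) (Fin N) ℝ) (h0 : ∀ i j, 0 ≤ A i j) (k : ℕ) :
    0 ≤ ∑ b : Fin N → Bool,
      (∑ i, ∑ j, A i j * (if b i then (1:ℝ) else -1) * (if b j then (1:ℝ) else -1)) ^ k := by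
  have hrw : ∀ b : Fin N → Bool,
      (∑ i, ∑ j, A i j * (if b i then (1:ℝ) else -1) * (if b j then (1:ℝ) else -1)) ^ k
      = ∑ p : Fin k → Fin N × Fin N,
          (∏ r, A (p r).1 (p r).2) *
            ∏ s : Fin k ⊕ Fin k,
              (if b ((Sum.elim (fun r => (p r).1) (fun r => (p r).2)) s) then (1:ℝ) else -1) := by
    intro b
    have : (∑ i, ∑ j, A i j * (if b i then (1:ℝ) else -1) * (if b j then (1:ℝ) else -1))
        = ∑ q : Fin N × Fin N, A q.1 q.2 * (if b q.1 then (1:ℝ) else -1) *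
            (if b q.2 then (1:ℝ) else -1) :=
      (Fintype.sum_prod_type (f := fun q : Fin N × Fin N =>
        A q.1 q.2 * (if b q.1 then (1:ℝ) else -1) * (if b q.2 then (1:ℝ) else -1))).symm
    rw [this, Fintype.sum_pow]
    refine Finset.sum_congr rfl fun p _ => ?_
    rw [Fintype.prod_sum_type]
    simp only [Sum.elim_inl, Sum.elim_inr]
    rw [← Finset.prod_mul_distrib, ← Finset.prod_mul_distrib]
    exact Finset.prod_congr rfl fun r _ => by exact mul_assoc _ _ _
  simp_rw [hrw]
  rw [Finset.sum_comm]
  refine Finset.sum_nonneg fun p _ => ?_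
  rw [← Finset.mul_sum]
  exact mul_nonneg (Finset.prod_nonneg fun r _ => h0 _ _) (sum_prod_signs_nonneg _)

lemma real_hasSum_exp (x : ℝ) : HasSum (fun n : ℕ => x ^ n / n.factorial) (Real.exp x) := by
  rw [Real.exp_eq_exp_ℝ]
  exact NormedSpace.expSeries_div_hasSum_exp x

lemma sum_exp_neg_le {α : Type*} [Fintype α] (w : α → ℝ)
    (h : ∀ k : ℕ, 0 ≤ ∑ a, w a ^ k) :
    ∑ a, Real.exp (-w a) ≤ ∑ a, Real.exp (w a) := by
  have H : HasSum (fun n : ℕ => ∑ a, (w a ^ n - (-w a) ^ n) / n.factorial)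
      (∑ a, (Real.exp (w a) - Real.exp (-w a))) := by
    refine hasSum_sum fun a _ => ?_
    have := (real_hasSum_exp (w a)).sub (real_hasSum_exp (-w a))
    simpa [sub_div] using this
  have hterm : ∀ n : ℕ, 0 ≤ ∑ a, (w a ^ n - (-w a) ^ n) / n.factorial := by
    intro n
    have : ∑ a, (w a ^ n - (-w a) ^ n) / n.factorial
        = (1 - (-1 : ℝ) ^ n) / n.factorial * ∑ a, w a ^ n := by
      rw [Finset.mul_sum]
      refine Finset.sum_congr rfl fun a _ => ?_
      rw [neg_pow]; ring
    rw [this]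
    refine mul_nonneg (div_nonneg ?_ (by positivity)) (h n)
    rcases Nat.even_or_odd n with he | ho
    · rw [he.neg_one_pow]; norm_num
    · rw [ho.neg_one_pow]; norm_num
  have := hasSum_le hterm hasSum_zero H
  have h2 : 0 ≤ ∑ a, (Real.exp (w a) - Real.exp (-w a)) := this
  rw [Finset.sum_sub_distrib] at h2
  linarith

lemma neg_log_le {u v : ℝ} (hu : |u| ≤ v) (hv1 : v < 1) :
    -Real.log (1 - u) ≤ u + u ^ 2 / (2 * (1 - v)) := by
  have hv0 : 0 ≤ v := le_trans (abs_nonneg u) hu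
  have habs : |u| < 1 := lt_of_le_of_lt hu hv1
  have h1 := Real.hasSum_pow_div_log_of_abs_lt_one habs
  have h2 : HasSum (fun n : ℕ => u ^ (n + 1 + 1) / (n + 1 + 1)) (-Real.log (1 - u) - u) := by
    have := (hasSum_nat_add_iff' (f := fun n : ℕ => u ^ (n + 1) / (n + 1)) 1).2 h1
    simpa using this
  have h3 : HasSum (fun n : ℕ => v ^ n * (u ^ 2 / 2)) ((1 - v)⁻¹ * (u ^ 2 / 2)) :=
    (hasSum_geometric_of_lt_one hv0 hv1).mul_right _
  have hle : ∀ n : ℕ, u ^ (n + 1 + 1) / (n + 1 + 1) ≤ v ^ n * (u ^ 2 / 2) := by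
    intro n
    have e1 : u ^ (n + 1 + 1) / ((n : ℝ) + 1 + 1) ≤ |u ^ (n + 1 + 1) / ((n : ℝ) + 1 + 1)| :=
      le_abs_self _
    have e2 : |u ^ (n + 1 + 1) / ((n : ℝ) + 1 + 1)| = |u| ^ (n + 1 + 1) / ((n : ℝ) + 1 + 1) := by
      rw [abs_div, abs_pow, abs_of_pos (show (0:ℝ) < (n : ℝ) + 1 + 1 by positivity)]
    have e3 : |u| ^ (n + 1 + 1) / ((n : ℝ) + 1 + 1) ≤ |u| ^ (n + 1 + 1) / 2 := by
      apply div_le_div_of_nonneg_left (by positivity) (by norm_num)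
      push_cast; linarith [Nat.cast_nonneg (α := ℝ) n]
    have e4 : |u| ^ (n + 1 + 1) ≤ v ^ n * u ^ 2 := by
      have : |u| ^ (n + 1 + 1) = |u| ^ n * |u| ^ 2 := by ring
      rw [this, sq_abs]
      exact mul_le_mul_of_nonneg_right (pow_le_pow_left₀ (abs_nonneg u) hu n) (sq_nonneg u)
    calc u ^ (n + 1 + 1) / ((n : ℝ) + 1 + 1) ≤ |u| ^ (n + 1 + 1) / ((n : ℝ) + 1 + 1) := by
          rw [← e2]; exact e1
      _ ≤ |u| ^ (n + 1 + 1) / 2 := e3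
      _ ≤ (v ^ n * u ^ 2) / 2 := by linarith [e4]
      _ = v ^ n * (u ^ 2 / 2) := by ring
  have key := hasSum_le (by exact_mod_cast hle) h2 h3
  have hv : 0 < 1 - v := by linarith
  have : (1 - v)⁻¹ * (u ^ 2 / 2) = u ^ 2 / (2 * (1 - v)) := by
    rw [mul_comm, ← div_eq_mul_inv, div_div, mul_comm]
  rw [this] at key
  linarith

lemma det_succ_schur {n : ℕ} (B : Matrix (Fin (n + 1)) (Fin (n + 1)) ℝ) (hB0 : B 0 0 ≠ 0) :
    B.det = B 0 0 * (B.submatrix Fin.succ Fin.succ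
      - (B 0 0)⁻¹ • Matrix.vecMulVec (fun i : Fin n => B i.succ 0) (fun j : Fin n => B 0 j.succ)).det := by
  set e : Fin 1 ⊕ Fin n ≃ Fin (n + 1) := finSumFinEquiv.trans (finCongr (Nat.add_comm 1 n)) with he
  have he1 : ∀ i : Fin 1, e (Sum.inl i) = 0 := by
    intro i
    apply Fin.ext
    simp [he, Fin.fin_one_eq_zero i]
  have he2 : ∀ j : Fin n, e (Sum.inr j) = j.succ := by
    intro j
    apply Fin.ext
    simp [he, Nat.add_comm 1 j.val]
  set A₁ : Matrix (Fin 1) (Fin 1) ℝ := Matrix.of fun _ _ => B 0 0 with hA₁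
  set B₁ : Matrix (Fin 1) (Fin n) ℝ := Matrix.of fun _ j => B 0 j.succ with hB₁
  set C₁ : Matrix (Fin n) (Fin 1) ℝ := Matrix.of fun i _ => B i.succ 0 with hC₁
  set D₁ : Matrix (Fin n) (Fin n) ℝ := B.submatrix Fin.succ Fin.succ with hD₁
  have hblock : B.submatrix e e = Matrix.fromBlocks A₁ B₁ C₁ D₁ := by
    ext i j
    cases i with
    | inl i => cases j with
      | inl j => simp [Matrix.submatrix_apply, he1, hA₁]
      | inr j => simp [Matrix.submatrix_apply, he1, he2, hB₁]
    | inr i => cases j with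
      | inl j => simp [Matrix.submatrix_apply, he1, he2, hC₁]
      | inr j => simp [Matrix.submatrix_apply, he2, hD₁]
  letI : Invertible A₁ := ⟨(B 0 0)⁻¹ • (1 : Matrix (Fin 1) (Fin 1) ℝ),
    by ext i j; fin_cases i; fin_cases j;
       simp [Matrix.mul_apply, hA₁, inv_mul_cancel₀ hB0, mul_inv_cancel₀ hB0],
    by ext i j; fin_cases i; fin_cases j;
       simp [Matrix.mul_apply, hA₁, inv_mul_cancel₀ hB0, mul_inv_cancel₀ hB0]⟩
  have hinv : ⅟ A₁ = (B 0 0)⁻¹ • (1 : Matrix (Fin 1) (Fin 1) ℝ) := rfl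
  have hCB : C₁ * ⅟ A₁ * B₁
      = (B 0 0)⁻¹ • Matrix.vecMulVec (fun i : Fin n => B i.succ 0) (fun j : Fin n => B 0 j.succ) := by
    rw [hinv, Matrix.mul_smul, Matrix.mul_one, Matrix.smul_mul]
    congr 1
    ext i j
    rw [Matrix.mul_apply, Fin.sum_univ_one]
    simp [hC₁, hB₁, Matrix.vecMulVec_apply]
  calc B.det = (B.submatrix e e).det := (Matrix.det_submatrix_equiv_self e B).symm
    _ = (Matrix.fromBlocks A₁ B₁ C₁ D₁).det := by rw [hblock]
    _ = A₁.det * (D₁ - C₁ * ⅟ A₁ * B₁).det := Matrix.det_fromBlocks₁₁ _ _ _ _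
    _ = _ := by rw [hCB, Matrix.det_fin_one]; rfl

lemma step_bound (a d q : ℝ) (ha0 : 0 ≤ a) (ha1 : a < 1) :
    Real.exp ((a + 2 * 1 * d + q) / 2) + Real.exp ((a + 2 * -1 * d + q) / 2)
      ≤ 2 / Real.sqrt (1 - a) * Real.exp ((q + (1 - a)⁻¹ * d ^ 2) / 2) := by
  have h1apos : 0 < 1 - a := by linarith
  have hsq : 0 < Real.sqrt (1 - a) := Real.sqrt_pos.2 h1apos
  have hexpa : Real.exp (a / 2) ≤ 1 / Real.sqrt (1 - a) := by
    have h1 : 1 - a ≤ Real.exp (-a) := by have := Real.add_one_le_exp (-a); linarith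
    have hsq2 : Real.sqrt (1 - a) ≤ Real.exp (-(a / 2)) := by
      have h2 := Real.sqrt_le_sqrt h1
      have h3 : Real.exp (-a) = Real.exp (-(a / 2)) ^ 2 := by
        rw [sq, ← Real.exp_add]; ring_nf
      rwa [h3, Real.sqrt_sq (Real.exp_pos _).le] at h2
    rw [le_div_iff₀ hsq]
    calc Real.exp (a / 2) * Real.sqrt (1 - a) ≤ Real.exp (a / 2) * Real.exp (-(a / 2)) :=
          mul_le_mul_of_nonneg_left hsq2 (Real.exp_pos _).le
      _ = 1 := by rw [← Real.exp_add]; simp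
  have e1 : (a + 2 * 1 * d + q) / 2 = (a + q) / 2 + d := by ring
  have e2 : (a + 2 * -1 * d + q) / 2 = (a + q) / 2 + -d := by ring
  rw [e1, e2, Real.exp_add, Real.exp_add, ← mul_add]
  have hcosh : Real.exp d + Real.exp (-d) = 2 * Real.cosh d := by rw [Real.cosh_eq]; ring
  rw [hcosh]
  have hinv1 : (1 : ℝ) ≤ (1 - a)⁻¹ := by
    rw [le_inv_comm₀ one_pos h1apos]; linarith
  have h2 : Real.cosh d ≤ Real.exp ((1 - a)⁻¹ * d ^ 2 / 2) := by
    refine (Real.cosh_le_exp_half_sq d).trans (Real.exp_le_exp.2 ?_)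
    have : d ^ 2 * 1 ≤ d ^ 2 * (1 - a)⁻¹ := mul_le_mul_of_nonneg_left hinv1 (sq_nonneg d)
    nlinarith
  calc Real.exp ((a + q) / 2) * (2 * Real.cosh d)
      ≤ Real.exp ((a + q) / 2) * (2 * Real.exp ((1 - a)⁻¹ * d ^ 2 / 2)) := by
        have := mul_le_mul_of_nonneg_left h2 (by norm_num : (0:ℝ) ≤ 2)
        exact mul_le_mul_of_nonneg_left this (Real.exp_pos _).le
    _ = Real.exp (a / 2) * (2 * Real.exp ((q + (1 - a)⁻¹ * d ^ 2) / 2)) := by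
        rw [show (a + q) / 2 = a / 2 + q / 2 by ring, Real.exp_add,
          show (q + (1 - a)⁻¹ * d ^ 2) / 2 = q / 2 + (1 - a)⁻¹ * d ^ 2 / 2 by ring,
          Real.exp_add]
        ring
    _ ≤ 1 / Real.sqrt (1 - a) * (2 * Real.exp ((q + (1 - a)⁻¹ * d ^ 2) / 2)) := by
        refine mul_le_mul_of_nonneg_right hexpa (by positivity)
    _ = 2 / Real.sqrt (1 - a) * Real.exp ((q + (1 - a)⁻¹ * d ^ 2) / 2) := by
        field_simp
lemma quad_dot {n : ℕ} (M : Matrix (Fin n) (Fin n) ℝ) (x : Fin n → ℝ) :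
    x ⬝ᵥ (M *ᵥ x) = ∑ i, ∑ j, M i j * x i * x j := by
  simp only [dotProduct, Matrix.mulVec]
  refine Finset.sum_congr rfl fun i _ => ?_
  rw [Finset.mul_sum]
  exact Finset.sum_congr rfl fun j _ => by ring

lemma qsplit {n : ℕ} (B : Matrix (Fin (n + 1)) (Fin (n + 1)) ℝ)
    (hB : ∀ i : Fin n, B i.succ 0 = B 0 i.succ) (s : ℝ) (y : Fin n → ℝ) :
    (∑ i, ∑ j, B i j * (Fin.cons s y : Fin (n + 1) → ℝ) i * (Fin.cons s y : Fin (n + 1) → ℝ) j)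
      = B 0 0 * s ^ 2 + 2 * s * (∑ j, B 0 j.succ * y j)
        + ∑ i, ∑ j, B i.succ j.succ * y i * y j := by
  simp only [Fin.sum_univ_succ, Fin.cons_zero, Fin.cons_succ]
  rw [Finset.sum_add_distrib]
  have h1 : ∑ j, B 0 j.succ * s * y j = s * ∑ j, B 0 j.succ * y j := by
    rw [Finset.mul_sum]; exact Finset.sum_congr rfl fun j _ => by ring
  have h2 : ∑ i, B i.succ 0 * y i * s = s * ∑ j, B 0 j.succ * y j := by
    rw [Finset.mul_sum]; exact Finset.sum_congr rfl fun i _ => by rw [hB i]; ring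
  rw [h1, h2]; ring

lemma cons_ne_zero {n : ℕ} (s : ℝ) (y : Fin n → ℝ) (hy : y ≠ 0) :
    (Fin.cons s y : Fin (n + 1) → ℝ) ≠ 0 := by
  intro hc
  apply hy
  funext i
  have := congrFun hc i.succ
  simpa using this

lemma key_ind : ∀ (n : ℕ) (M : Matrix (Fin n) (Fin n) ℝ), M.IsHermitian → (∀ i, 0 ≤ M i i) →
    ((1 : Matrix (Fin n) (Fin n) ℝ) - M).PosDef →
    (∑ b : Fin n → Bool, Real.exp ((∑ i, ∑ j,
        M i j * (if b i then (1 : ℝ) else -1) * (if b j then (1 : ℝ) else -1)) / 2))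
      ≤ 2 ^ n / Real.sqrt ((1 - M).det) := by
  intro n
  induction n with
  | zero =>
    intro M _ _ _
    simp [Matrix.det_fin_zero]
  | succ n ih =>
    intro M hM hdiag hpos
    have hsym : ∀ i j, M i j = M j i := by
      intro i j
      have := congrFun (congrFun hM i) j
      simpa [Matrix.conjTranspose_apply] using this.symm
    have hMs : ∀ i : Fin n, M i.succ 0 = M 0 i.succ := fun i => hsym _ _
    have hstar : ∀ x : Fin (n + 1) → ℝ, star x = x := fun x => funext fun i => by simp
    have hstar' : ∀ x : Fin n → ℝ, star x = x := fun x => funext fun i => by simp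
    set a := M 0 0 with ha
    have ha1 : a < 1 := by
      have hne : (Pi.single 0 1 : Fin (n + 1) → ℝ) ≠ 0 := by
        intro h
        have := congrFun h 0
        simp [Pi.single_apply] at this
      have h2 := hpos.dotProduct_mulVec_pos hne
      rw [hstar] at h2
      have heval : (Pi.single 0 1 : Fin (n + 1) → ℝ) ⬝ᵥ ((1 - M) *ᵥ Pi.single 0 1)
          = 1 - a := by
        rw [quad_dot]
        rw [Finset.sum_eq_single 0 (fun i _ hi => by
          rw [Finset.sum_eq_zero]; intro j _; simp [Pi.single_apply, hi]) (by simp)]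
        rw [Finset.sum_eq_single 0 (fun j _ hj => by simp [Pi.single_apply, hj]) (by simp)]
        simp [Matrix.sub_apply, Matrix.one_apply, ha]
      rw [heval] at h2
      linarith
    have ha0 : 0 ≤ a := hdiag 0
    have h1apos : 0 < 1 - a := by linarith
    set M' := M.submatrix Fin.succ Fin.succ with hM'
    set Mt := M' + (1 - a)⁻¹ • Matrix.vecMulVec (fun i : Fin n => M 0 i.succ)
      (fun j : Fin n => M 0 j.succ) with hMt
    have hMtapp : ∀ i j, Mt i j
        = M i.succ j.succ + (1 - a)⁻¹ * (M 0 i.succ * M 0 j.succ) := by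
      intro i j
      simp [hMt, Matrix.add_apply, Matrix.smul_apply, Matrix.vecMulVec_apply, hM',
        Matrix.submatrix_apply, smul_eq_mul]
    have hMtsym : Mt.IsHermitian := by
      ext i j
      simp only [Matrix.conjTranspose_apply, hMtapp, star_trivial]
      rw [hsym j.succ i.succ]; ring
    have hMtdiag : ∀ i, 0 ≤ Mt i i := by
      intro i
      rw [hMtapp]
      exact add_nonneg (hdiag i.succ)
        (mul_nonneg (inv_nonneg.2 h1apos.le) (mul_self_nonneg _))
    -- quadratic form of Mt
    have hqMt : ∀ y : Fin n → ℝ, (∑ i, ∑ j, Mt i j * y i * y j)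
        = (∑ i, ∑ j, M i.succ j.succ * y i * y j)
          + (1 - a)⁻¹ * (∑ j, M 0 j.succ * y j) ^ 2 := by
      intro y
      have h1 : ∀ i j, Mt i j * y i * y j
          = M i.succ j.succ * y i * y j
            + (1 - a)⁻¹ * ((M 0 i.succ * y i) * (M 0 j.succ * y j)) := by
        intro i j; rw [hMtapp]; ring
      calc (∑ i, ∑ j, Mt i j * y i * y j)
          = ∑ i, ∑ j, (M i.succ j.succ * y i * y j
              + (1 - a)⁻¹ * ((M 0 i.succ * y i) * (M 0 j.succ * y j))) :=
            Finset.sum_congr rfl fun i _ => Finset.sum_congr rfl fun j _ => h1 i j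
        _ = (∑ i, ∑ j, M i.succ j.succ * y i * y j)
            + ∑ i, ∑ j, (1 - a)⁻¹ * ((M 0 i.succ * y i) * (M 0 j.succ * y j)) := by
            rw [← Finset.sum_add_distrib]
            exact Finset.sum_congr rfl fun i _ => by rw [← Finset.sum_add_distrib]
        _ = (∑ i, ∑ j, M i.succ j.succ * y i * y j)
            + (1 - a)⁻¹ * (∑ j, M 0 j.succ * y j) ^ 2 := by
            congr 1
            rw [sq, Finset.sum_mul_sum, Finset.mul_sum]
            exact Finset.sum_congr rfl fun i _ => by rw [Finset.mul_sum]
    -- entries of 1 - M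
    have e0 : (1 - M) 0 0 = 1 - a := by simp [Matrix.sub_apply, Matrix.one_apply, ha]
    have e1 : ∀ i : Fin n, (1 - M) i.succ 0 = -(M i.succ 0) := fun i => by
      simp [Matrix.sub_apply, Matrix.one_apply_ne (Fin.succ_ne_zero i)]
    have e2 : ∀ j : Fin n, (1 - M) 0 j.succ = -(M 0 j.succ) := fun j => by
      simp [Matrix.sub_apply, Matrix.one_apply_ne (Ne.symm (Fin.succ_ne_zero j))]
    have e3 : ∀ i j : Fin n, (1 - M) i.succ j.succ
        = (1 : Matrix (Fin n) (Fin n) ℝ) i j - M i.succ j.succ := fun i j => by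
      simp [Matrix.sub_apply, Matrix.one_apply, Fin.succ_inj]
    -- determinant identity
    have hdet : (1 - M).det = (1 - a) * (1 - Mt).det := by
      have h := det_succ_schur (1 - M) (by rw [e0]; exact ne_of_gt h1apos)
      rw [e0] at h
      rw [h]
      congr 2
      ext i j
      simp only [Matrix.sub_apply, Matrix.submatrix_apply, Matrix.smul_apply,
        Matrix.vecMulVec_apply, smul_eq_mul, hMtapp, e1, e2, e3]
      rw [hMs i]
      ring
    -- positive definiteness of 1 - Mt
    have hposMt : ((1 : Matrix (Fin n) (Fin n) ℝ) - Mt).PosDef := by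
      refine Matrix.PosDef.of_dotProduct_mulVec_pos ?_ ?_
      · exact Matrix.isHermitian_one.sub hMtsym
      · intro y hy
        rw [hstar']
        have hx0 := cons_ne_zero ((1 - a)⁻¹ * ∑ j, M 0 j.succ * y j) y hy
        have h2 := hpos.dotProduct_mulVec_pos hx0
        rw [hstar, quad_dot, qsplit (1 - M) (fun i => by rw [e1 i, e2 i, hMs i])] at h2
        rw [e0] at h2
        have hsum2 : ∑ j, (1 - M) 0 j.succ * y j = -(∑ j, M 0 j.succ * y j) := by
          rw [← Finset.sum_neg_distrib]
          exact Finset.sum_congr rfl fun j _ => by rw [e2 j]; ring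
        have hsum3 : (∑ i, ∑ j, (1 - M) i.succ j.succ * y i * y j)
            = (∑ i, ∑ j, (1 : Matrix (Fin n) (Fin n) ℝ) i j * y i * y j)
              - ∑ i, ∑ j, M i.succ j.succ * y i * y j := by
          rw [← Finset.sum_sub_distrib]
          refine Finset.sum_congr rfl fun i _ => ?_
          rw [← Finset.sum_sub_distrib]
          exact Finset.sum_congr rfl fun j _ => by rw [e3 i j]; ring
        rw [hsum2, hsum3] at h2
        rw [quad_dot]
        have hgoal : (∑ i, ∑ j, ((1 : Matrix (Fin n) (Fin n) ℝ) - Mt) i j * y i * y j)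
            = (∑ i, ∑ j, (1 : Matrix (Fin n) (Fin n) ℝ) i j * y i * y j)
              - ((∑ i, ∑ j, M i.succ j.succ * y i * y j)
                + (1 - a)⁻¹ * (∑ j, M 0 j.succ * y j) ^ 2) := by
          rw [← hqMt y, ← Finset.sum_sub_distrib]
          refine Finset.sum_congr rfl fun i _ => ?_
          rw [← Finset.sum_sub_distrib]
          refine Finset.sum_congr rfl fun j _ => ?_
          rw [Matrix.sub_apply]; ring
        rw [hgoal]
        have hkey : (1 - a) * ((1 - a)⁻¹ * ∑ j, M 0 j.succ * y j) ^ 2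
            + 2 * ((1 - a)⁻¹ * ∑ j, M 0 j.succ * y j) * -(∑ j, M 0 j.succ * y j)
            = -((1 - a)⁻¹ * (∑ j, M 0 j.succ * y j) ^ 2) := by
          field_simp
          ring
        rw [hkey] at h2
        linarith
    -- main chain
    rw [sum_pi_succ]
    have hxrw : ∀ (s : Bool) (b' : Fin n → Bool) (i : Fin (n + 1)),
        (if (Fin.cons s b' : Fin (n + 1) → Bool) i then (1 : ℝ) else -1)
          = (Fin.cons (if s then (1 : ℝ) else -1)
              (fun k => if b' k then (1 : ℝ) else -1) : Fin (n + 1) → ℝ) i := by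
      intro s b' i
      induction i using Fin.cases <;> simp
    have hq : ∀ (s : Bool) (b' : Fin n → Bool),
        (∑ i, ∑ j, M i j * (if (Fin.cons s b' : Fin (n + 1) → Bool) i then (1 : ℝ) else -1)
            * (if (Fin.cons s b' : Fin (n + 1) → Bool) j then (1 : ℝ) else -1))
          = a + 2 * (if s then (1 : ℝ) else -1)
              * (∑ j, M 0 j.succ * (if b' j then (1 : ℝ) else -1))
            + ∑ i, ∑ j, M i.succ j.succ * (if b' i then (1 : ℝ) else -1)
              * (if b' j then (1 : ℝ) else -1) := by
      intro s b'
      have hσ : (if s then (1 : ℝ) else -1) ^ 2 = 1 := by cases s <;> norm_num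
      calc (∑ i, ∑ j, M i j * (if (Fin.cons s b' : Fin (n + 1) → Bool) i then (1 : ℝ) else -1)
            * (if (Fin.cons s b' : Fin (n + 1) → Bool) j then (1 : ℝ) else -1))
          = ∑ i, ∑ j, M i j
              * (Fin.cons (if s then (1 : ℝ) else -1)
                  (fun k => if b' k then (1 : ℝ) else -1) : Fin (n + 1) → ℝ) i
              * (Fin.cons (if s then (1 : ℝ) else -1)
                  (fun k => if b' k then (1 : ℝ) else -1) : Fin (n + 1) → ℝ) j :=
            Finset.sum_congr rfl fun i _ => Finset.sum_congr rfl fun j _ => by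
              rw [hxrw s b' i, hxrw s b' j]
        _ = _ := by
            rw [qsplit M hMs]
            rw [hσ]
            ring
    calc (∑ s : Bool, ∑ b' : Fin n → Bool, Real.exp ((∑ i, ∑ j, M i j
            * (if (Fin.cons s b' : Fin (n + 1) → Bool) i then (1 : ℝ) else -1)
            * (if (Fin.cons s b' : Fin (n + 1) → Bool) j then (1 : ℝ) else -1)) / 2))
        = ∑ b' : Fin n → Bool, ∑ s : Bool, Real.exp
            ((a + 2 * (if s then (1 : ℝ) else -1)
                * (∑ j, M 0 j.succ * (if b' j then (1 : ℝ) else -1))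
              + ∑ i, ∑ j, M i.succ j.succ * (if b' i then (1 : ℝ) else -1)
                * (if b' j then (1 : ℝ) else -1)) / 2) := by
          rw [Finset.sum_comm]
          exact Finset.sum_congr rfl fun b' _ => Finset.sum_congr rfl fun s _ => by
            rw [hq s b']
      _ ≤ ∑ b' : Fin n → Bool, 2 / Real.sqrt (1 - a) * Real.exp
            ((∑ i, ∑ j, Mt i j * (if b' i then (1 : ℝ) else -1)
              * (if b' j then (1 : ℝ) else -1)) / 2) := by
          refine Finset.sum_le_sum fun b' _ => ?_
          rw [Fintype.sum_bool, if_pos rfl, if_neg (by simp)]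
          rw [hqMt]
          exact step_bound a _ _ ha0 ha1
      _ = 2 / Real.sqrt (1 - a) * ∑ b' : Fin n → Bool, Real.exp
            ((∑ i, ∑ j, Mt i j * (if b' i then (1 : ℝ) else -1)
              * (if b' j then (1 : ℝ) else -1)) / 2) := by
          rw [Finset.mul_sum]
      _ ≤ 2 / Real.sqrt (1 - a) * (2 ^ n / Real.sqrt ((1 - Mt).det)) := by
          refine mul_le_mul_of_nonneg_left (ih Mt hMtsym hMtdiag hposMt) ?_
          positivity
      _ = 2 ^ (n + 1) / Real.sqrt ((1 - M).det) := by
          rw [hdet, Real.sqrt_mul h1apos.le, div_mul_div_comm]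
          congr 1
          rw [pow_succ]
          ring


section Spectral
variable {N : ℕ} (U : Matrix (Fin N) (Fin N) ℝ) (μ : Fin N → ℝ)

lemma decomp_quad (A : Matrix (Fin N) (Fin N) ℝ)
    (hspec : A = U * Matrix.diagonal μ * Uᵀ) (x : Fin N → ℝ) :
    x ⬝ᵥ (A *ᵥ x) = ∑ k, μ k * ((Uᵀ *ᵥ x) k) ^ 2 := by
  rw [hspec, ← Matrix.mulVec_mulVec, ← Matrix.mulVec_mulVec,
    Matrix.dotProduct_mulVec x U, ← Matrix.mulVec_transpose]
  generalize (Uᵀ *ᵥ x) = y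
  simp only [dotProduct, Matrix.mulVec, Matrix.diagonal_apply]
  refine Finset.sum_congr rfl fun k _ => ?_
  rw [show (∑ x : Fin N, (if k = x then μ k else 0) * y x) = μ k * y k by
    simp [ite_mul, Finset.sum_ite_eq]]
  ring

lemma decomp_norm (hU2 : U * Uᵀ = 1) (x : Fin N → ℝ) :
    (Uᵀ *ᵥ x) ⬝ᵥ (Uᵀ *ᵥ x) = x ⬝ᵥ x := by
  rw [Matrix.dotProduct_mulVec (Uᵀ *ᵥ x) Uᵀ x, Matrix.vecMul_transpose,
    Matrix.mulVec_mulVec, hU2, Matrix.one_mulVec]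

lemma decomp_norm' (hU1 : Uᵀ * U = 1) (x : Fin N → ℝ) :
    (U *ᵥ x) ⬝ᵥ (U *ᵥ x) = x ⬝ᵥ x := by
  rw [Matrix.dotProduct_mulVec (U *ᵥ x) U x, ← Matrix.mulVec_transpose,
    Matrix.mulVec_mulVec, hU1, Matrix.one_mulVec]

lemma decomp_trace (A : Matrix (Fin N) (Fin N) ℝ) (hU1 : Uᵀ * U = 1)
    (hspec : A = U * Matrix.diagonal μ * Uᵀ) : A.trace = ∑ k, μ k := by
  rw [hspec, Matrix.trace_mul_comm (U * Matrix.diagonal μ) Uᵀ, ← Matrix.mul_assoc, hU1,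
    Matrix.one_mul, Matrix.trace_diagonal]

lemma decomp_trace2 (A : Matrix (Fin N) (Fin N) ℝ) (hU1 : Uᵀ * U = 1)
    (hspec : A = U * Matrix.diagonal μ * Uᵀ) : (A * A).trace = ∑ k, μ k ^ 2 := by
  have hAA : A * A = U * (Matrix.diagonal μ * Matrix.diagonal μ) * Uᵀ := by
    rw [hspec]
    simp only [Matrix.mul_assoc]
    rw [← Matrix.mul_assoc Uᵀ U, hU1, Matrix.one_mul]
  rw [hAA, Matrix.trace_mul_comm, ← Matrix.mul_assoc, hU1, Matrix.one_mul,
    Matrix.diagonal_mul_diagonal, Matrix.trace_diagonal]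
  exact Finset.sum_congr rfl fun k _ => (sq (μ k)).symm

lemma decomp_det (A : Matrix (Fin N) (Fin N) ℝ) (t : ℝ) (hU2 : U * Uᵀ = 1)
    (hspec : A = U * Matrix.diagonal μ * Uᵀ) :
    (1 - t • A).det = ∏ k, (1 - t * μ k) := by
  have hdec : (1 : Matrix (Fin N) (Fin N) ℝ) - t • A
      = U * Matrix.diagonal (fun k => 1 - t * μ k) * Uᵀ := by
    have h1 : Matrix.diagonal (fun k => 1 - t * μ k)
        = 1 - t • Matrix.diagonal μ := by
      ext i j
      by_cases h : i = j <;>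
        simp [Matrix.diagonal_apply, h, Matrix.one_apply, Matrix.smul_apply]
    rw [h1, Matrix.mul_sub, Matrix.sub_mul, Matrix.mul_one, hU2]
    congr 1
    rw [Matrix.mul_smul, Matrix.smul_mul, hspec]
  rw [hdec, Matrix.det_mul, Matrix.det_mul, Matrix.det_diagonal]
  have hdet1 : U.det * Uᵀ.det = 1 := by
    rw [← Matrix.det_mul, hU2, Matrix.det_one]
  calc U.det * (∏ k, (1 - t * μ k)) * Uᵀ.det
      = (∏ k, (1 - t * μ k)) * (U.det * Uᵀ.det) := by ring
    _ = ∏ k, (1 - t * μ k) := by rw [hdet1, mul_one]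

end Spectral
lemma prod_bound {N : ℕ} (μ : Fin N → ℝ) (lam1 t l : ℝ)
    (habs : ∀ k, |t * μ k| ≤ t * lam1) (hv1 : t * lam1 < 1)
    (hsum : ∑ k, μ k = 0) (hsum2 : ∑ k, μ k ^ 2 = 2 * l) :
    1 / Real.sqrt (∏ k, (1 - t * μ k)) ≤ Real.exp (l * t ^ 2 / (2 * (1 - lam1 * t))) := by
  have hpos : ∀ k, 0 < 1 - t * μ k := by
    intro k
    have h1 : t * μ k ≤ |t * μ k| := le_abs_self _
    have := habs k
    linarith
  have hP : 0 < ∏ k, (1 - t * μ k) := Finset.prod_pos fun k _ => hpos k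
  have hsqrtP : 0 < Real.sqrt (∏ k, (1 - t * μ k)) := Real.sqrt_pos.2 hP
  have h1 : 1 / Real.sqrt (∏ k, (1 - t * μ k))
      = Real.exp (-(Real.log (∏ k, (1 - t * μ k)) / 2)) := by
    rw [one_div, ← Real.log_sqrt hP.le, Real.exp_neg, Real.exp_log hsqrtP]
  rw [h1]
  apply Real.exp_le_exp.2
  have hlog : Real.log (∏ k, (1 - t * μ k)) = ∑ k, Real.log (1 - t * μ k) :=
    Real.log_prod fun k _ => ne_of_gt (hpos k)
  have hbd : ∑ k, -Real.log (1 - t * μ k)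
      ≤ ∑ k, (t * μ k + (t * μ k) ^ 2 / (2 * (1 - t * lam1))) :=
    Finset.sum_le_sum fun k _ => neg_log_le (habs k) hv1
  have hrhs : ∑ k, (t * μ k + (t * μ k) ^ 2 / (2 * (1 - t * lam1)))
      = t ^ 2 * (2 * l) / (2 * (1 - t * lam1)) := by
    rw [Finset.sum_add_distrib, ← Finset.mul_sum, hsum, mul_zero, zero_add, ← Finset.sum_div]
    congr 1
    rw [← hsum2, Finset.mul_sum]
    exact Finset.sum_congr rfl fun k _ => by ring
  have hneg : -(Real.log (∏ k, (1 - t * μ k))) = ∑ k, -Real.log (1 - t * μ k) := by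
    rw [hlog, ← Finset.sum_neg_distrib]
  have : -(Real.log (∏ k, (1 - t * μ k))) ≤ t ^ 2 * (2 * l) / (2 * (1 - t * lam1)) := by
    rw [hneg]; linarith
  have hden : (0:ℝ) < 1 - t * lam1 := by linarith
  have hfin : t ^ 2 * (2 * l) / (2 * (1 - t * lam1)) / 2 = l * t ^ 2 / (2 * (1 - lam1 * t)) := by
    rw [mul_comm lam1 t]
    field_simp
  have h2 : -(Real.log (∏ k, (1 - t * μ k))) / 2 ≤ t ^ 2 * (2 * l) / (2 * (1 - t * lam1)) / 2 := by
    linarith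
  calc -(Real.log (∏ k, (1 - t * μ k)) / 2)
      = -(Real.log (∏ k, (1 - t * μ k))) / 2 := by ring
    _ ≤ t ^ 2 * (2 * l) / (2 * (1 - t * lam1)) / 2 := h2
    _ = l * t ^ 2 / (2 * (1 - lam1 * t)) := hfin

/-- Komlós–Paturi: bound on the moment generating function of the
quadratic form `S = ∑_{{i,j}∈E} X_i X_j` over the edges of a simple graph,
for i.i.d. uniform `±1` random variables attached to the vertices. -/
theorem komlos_paturi_mgf {N : ℕ} (A : Matrix (Fin N) (Fin N) ℝ)
    (hA : A.IsHermitian)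
    (h01 : ∀ i j, A i j = 0 ∨ A i j = 1) (hdiag : ∀ i, A i i = 0)
    (lam1 l : ℝ) (hlam : lam1 = ⨆ i, hA.eigenvalues i)
    (hl : l = (∑ i, ∑ j, A i j) / 2)
    (S : (Fin N → ℝ) → ℝ) (hS : ∀ x, S x = (∑ i, ∑ j, A i j * x i * x j) / 2)
    (E : ((Fin N → ℝ) → ℝ) → ℝ)
    (hE : ∀ f, E f = (∑ b : Fin N → Bool, f fun i => if b i then (1 : ℝ) else -1) / 2 ^ N)
    (t : ℝ) (ht0 : 0 ≤ t) (ht1 : t < 1 / lam1) :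
    E (fun x => Real.exp (-(t * S x))) ≤ E (fun x => Real.exp (t * S x)) ∧
      E (fun x => Real.exp (t * S x)) ≤ Real.exp (l * t ^ 2 / (2 * (1 - lam1 * t))) := by
  classical
  rcases le_or_gt lam1 0 with hneg | hlam1pos
  · exact absurd ht1 (not_lt.2 (le_trans (one_div_nonpos.mpr hneg) ht0))
  have h0 : ∀ i j, 0 ≤ A i j := fun i j => by rcases h01 i j with h | h <;> rw [h] <;> norm_num
  have hsymA : ∀ i j, A i j = A j i := fun i j => by
    have := congrFun (congrFun hA i) j
    simpa [Matrix.conjTranspose_apply] using this.symm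
  set μ := hA.eigenvalues with hμ
  set U : Matrix (Fin N) (Fin N) ℝ := (hA.eigenvectorUnitary : Matrix (Fin N) (Fin N) ℝ)
    with hU
  have hsU : star U = Uᵀ := by
    ext i j; simp [Matrix.conjTranspose_apply]
  have hU2 : U * Uᵀ = 1 := by
    rw [← hsU]; exact (Matrix.mem_unitaryGroup_iff).mp hA.eigenvectorUnitary.2
  have hU1 : Uᵀ * U = 1 := by
    rw [← hsU]; exact (Matrix.mem_unitaryGroup_iff').mp hA.eigenvectorUnitary.2
  have hspec : A = U * Matrix.diagonal μ * Uᵀ := by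
    have h := Matrix.IsHermitian.spectral_theorem hA
    rw [← hsU]
    simpa [RCLike.ofReal_real_eq_id] using h
  have hmax : ∀ k, μ k ≤ lam1 := by
    intro k; rw [hlam]; exact le_ciSup (Finite.bddAbove_range _) k
  have hray : ∀ x : Fin N → ℝ, x ⬝ᵥ (A *ᵥ x) ≤ lam1 * (x ⬝ᵥ x) := by
    intro x
    rw [decomp_quad U μ A hspec x, ← decomp_norm U hU2 x]
    rw [show (Uᵀ *ᵥ x) ⬝ᵥ (Uᵀ *ᵥ x) = ∑ k, ((Uᵀ *ᵥ x) k) ^ 2 by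
      simp [dotProduct, sq]]
    rw [Finset.mul_sum]
    exact Finset.sum_le_sum fun k _ => mul_le_mul_of_nonneg_right (hmax k) (sq_nonneg _)
  have hmin : ∀ k, -lam1 ≤ μ k := by
    intro k
    set v := U *ᵥ Pi.single k 1 with hv
    have hUv : Uᵀ *ᵥ v = Pi.single k 1 := by
      rw [hv, Matrix.mulVec_mulVec, hU1, Matrix.one_mulVec]
    have hvv : v ⬝ᵥ v = 1 := by
      rw [hv, decomp_norm' U hU1]
      simp [dotProduct, Pi.single_apply]
    have hvAv : v ⬝ᵥ (A *ᵥ v) = μ k := by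
      rw [decomp_quad U μ A hspec v, hUv]
      rw [Finset.sum_eq_single k (fun j _ hj => by simp [Pi.single_apply, hj]) (by simp)]
      simp [Pi.single_apply]
    have hlow : -((fun i => |v i|) ⬝ᵥ (A *ᵥ fun i => |v i|)) ≤ v ⬝ᵥ (A *ᵥ v) := by
      rw [quad_dot, quad_dot, ← Finset.sum_neg_distrib]
      refine Finset.sum_le_sum fun i _ => ?_
      rw [← Finset.sum_neg_distrib]
      refine Finset.sum_le_sum fun j _ => ?_
      have h1 : -(|v i| * |v j|) ≤ v i * v j := by
        rw [← abs_mul]; exact neg_abs_le _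
      calc -(A i j * |v i| * |v j|) = A i j * -(|v i| * |v j|) := by ring
        _ ≤ A i j * (v i * v j) := mul_le_mul_of_nonneg_left h1 (h0 i j)
        _ = A i j * v i * v j := by ring
    have hww : (fun i => |v i|) ⬝ᵥ (fun i => |v i|) = 1 := by
      rw [← hvv]; simp [dotProduct, abs_mul_abs_self]
    have hup : (fun i => |v i|) ⬝ᵥ (A *ᵥ fun i => |v i|) ≤ lam1 := by
      have := hray fun i => |v i|
      rw [hww, mul_one] at this
      exact this
    rw [hvAv] at hlow
    linarith
  have habs : ∀ k, |t * μ k| ≤ t * lam1 := by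
    intro k
    rw [abs_mul, abs_of_nonneg ht0]
    exact mul_le_mul_of_nonneg_left (abs_le.2 ⟨hmin k, hmax k⟩) ht0
  have hv1 : t * lam1 < 1 := (lt_div_iff₀ hlam1pos).1 ht1
  have htr : ∑ k, μ k = 0 := by
    rw [← decomp_trace U μ A hU1 hspec, Matrix.trace]
    simp [Matrix.diag, hdiag]
  have htr2 : ∑ k, μ k ^ 2 = 2 * l := by
    rw [← decomp_trace2 U μ A hU1 hspec]
    have h2 : (A * A).trace = ∑ i, ∑ j, A i j := by
      rw [Matrix.trace]
      simp only [Matrix.diag, Matrix.mul_apply]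
      refine Finset.sum_congr rfl fun i _ => Finset.sum_congr rfl fun j _ => ?_
      rw [← hsymA i j]
      rcases h01 i j with h | h <;> rw [h] <;> norm_num
    rw [h2, hl]; ring
  have hsmulherm : (t • A).IsHermitian := by
    ext i j
    simp only [Matrix.conjTranspose_apply, Matrix.smul_apply, star_trivial, smul_eq_mul]
    rw [hsymA j i]
  have hsmuldiag : ∀ i, 0 ≤ (t • A) i i := fun i => by
    simp [Matrix.smul_apply, hdiag i]
  have hposdef : ((1 : Matrix (Fin N) (Fin N) ℝ) - t • A).PosDef := by
    refine Matrix.PosDef.of_dotProduct_mulVec_pos ?_ ?_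
    · show (1 - t • A)ᴴ = 1 - t • A
      rw [Matrix.conjTranspose_sub, Matrix.conjTranspose_one, hsmulherm]
    · intro x hx
      have hxx : 0 < x ⬝ᵥ x := by
        obtain ⟨i, hi⟩ := Function.ne_iff.1 hx
        exact Finset.sum_pos' (fun i _ => mul_self_nonneg _)
          ⟨i, Finset.mem_univ i, mul_self_pos.2 (by simpa using hi)⟩
      have hstarx : star x = x := funext fun i => by simp
      rw [hstarx]
      rw [show x ⬝ᵥ ((1 - t • A) *ᵥ x) = x ⬝ᵥ x - t * (x ⬝ᵥ (A *ᵥ x)) by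
        rw [Matrix.sub_mulVec, dotProduct_sub, Matrix.one_mulVec,
          Matrix.smul_mulVec, dotProduct_smul, smul_eq_mul]]
      have h2 : t * (x ⬝ᵥ (A *ᵥ x)) ≤ t * (lam1 * (x ⬝ᵥ x)) :=
        mul_le_mul_of_nonneg_left (hray x) ht0
      nlinarith
  have hkey := key_ind N (t • A) hsmulherm hsmuldiag hposdef
  have h2pow : (0 : ℝ) < 2 ^ N := by positivity
  constructor
  · rw [hE, hE]
    have hmom : ∀ k : ℕ, 0 ≤ ∑ b : Fin N → Bool,
        (t * S fun i => if b i then (1 : ℝ) else -1) ^ k := by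
      intro k
      have hterm : ∀ b : Fin N → Bool, (t * S fun i => if b i then (1 : ℝ) else -1) ^ k
          = (t / 2) ^ k * (∑ i, ∑ j, A i j * (if b i then (1 : ℝ) else -1)
              * (if b j then (1 : ℝ) else -1)) ^ k := by
        intro b
        rw [hS, show t * ((∑ i, ∑ j, A i j * (if b i then (1 : ℝ) else -1)
            * (if b j then (1 : ℝ) else -1)) / 2)
          = (t / 2) * (∑ i, ∑ j, A i j * (if b i then (1 : ℝ) else -1)
              * (if b j then (1 : ℝ) else -1)) by ring, mul_pow]
      rw [Finset.sum_congr rfl fun b _ => hterm b, ← Finset.mul_sum]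
      exact mul_nonneg (pow_nonneg (by linarith) k) (moments_nonneg A h0 k)
    have := sum_exp_neg_le (fun b : Fin N → Bool =>
      t * S fun i => if b i then (1 : ℝ) else -1) hmom
    gcongr
  · rw [hE]
    have hEq : ∀ b : Fin N → Bool, t * S (fun i => if b i then (1 : ℝ) else -1)
        = (∑ i, ∑ j, (t • A) i j * (if b i then (1 : ℝ) else -1)
            * (if b j then (1 : ℝ) else -1)) / 2 := by
      intro b
      rw [hS]
      rw [show (∑ i, ∑ j, (t • A) i j * (if b i then (1 : ℝ) else -1)
            * (if b j then (1 : ℝ) else -1))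
          = t * ∑ i, ∑ j, A i j * (if b i then (1 : ℝ) else -1)
              * (if b j then (1 : ℝ) else -1) by
        rw [Finset.mul_sum]
        refine Finset.sum_congr rfl fun i _ => ?_
        rw [Finset.mul_sum]
        refine Finset.sum_congr rfl fun j _ => ?_
        simp only [Matrix.smul_apply, smul_eq_mul]
        ring]
      ring
    calc (∑ b : Fin N → Bool, Real.exp (t * S fun i => if b i then (1 : ℝ) else -1)) / 2 ^ N
        = (∑ b : Fin N → Bool, Real.exp ((∑ i, ∑ j, (t • A) i j
            * (if b i then (1 : ℝ) else -1) * (if b j then (1 : ℝ) else -1)) / 2)) / 2 ^ N := by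
          congr 1
          exact Finset.sum_congr rfl fun b _ => by rw [hEq b]
      _ ≤ (2 ^ N / Real.sqrt ((1 - t • A).det)) / 2 ^ N := by gcongr
      _ = 1 / Real.sqrt ((1 - t • A).det) := by
          rw [div_div, mul_comm, ← div_div, div_self (ne_of_gt h2pow)]
      _ = 1 / Real.sqrt (∏ k, (1 - t * μ k)) := by rw [decomp_det U μ A t hU2 hspec]
      _ ≤ Real.exp (l * t ^ 2 / (2 * (1 - lam1 * t))) := prod_bound μ lam1 t l habs hv1 htr htr2
end

section
/- Let G be the graph on N vertices consisting of the disjoint union of the complete graph K_m on vertices {1,…,m} and the complete graph K_{N−m} on vertices {m+1,…,N} (with log N ≪ m ≪ N), possibly joined by a single edge. Consider the Hopfield model on G with the single stored pattern ξ¹ with ξ_i¹ = 1 for all i, and the corrupted input x̃ with x̃_i = −1 for i ≤ m and x̃_i = 1 for m+1 ≤ i ≤ N. Then T_i(x̃) = x̃_i for every i, i.e. x̃ is a fixed point of the parallel dynamics T, so the retrieval dynamics cannot correct the m errors. -/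
open scoped BigOperators

/-- Sign function with the convention `sgn 0 = 1`. -/
noncomputable def sgn (x : ℝ) : ℝ := if 0 ≤ x then 1 else -1

/-- The parallel retrieval dynamics of the Hopfield model with adjacency matrix `A`
and patterns `ξ`: `T_i(σ) = sgn(∑_j σ_j a_{ij} ∑_μ ξ_i^μ ξ_j^μ)`. -/
noncomputable def hopT {N M : ℕ} (A : Matrix (Fin N) (Fin N) ℝ)
    (ξ : Fin M → Fin N → ℝ) (σ : Fin N → ℝ) : Fin N → ℝ :=
  fun i => sgn (∑ j, σ j * A i j * ∑ μ, ξ μ i * ξ μ j)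

lemma two_cliques_key (N mm : ℕ) (hm : 3 ≤ mm) (hmN : mm + 2 ≤ N)
    (u v : Fin N) (hu : (u : ℕ) < mm) (hv : mm ≤ (v : ℕ)) (ex : Bool)
    (A : Matrix (Fin N) (Fin N) ℝ)
    (hA : ∀ i j, A i j =
      if i = j then 0
      else if ((i : ℕ) < mm ↔ (j : ℕ) < mm) then 1
      else if ex = true ∧ ((i = u ∧ j = v) ∨ (i = v ∧ j = u)) then 1 else 0)
    (xt : Fin N → ℝ) (hxt : ∀ i, xt i = if (i : ℕ) < mm then -1 else 1)
    (i : Fin N) : hopT A (fun _ : Fin 1 => fun _ => (1 : ℝ)) xt i = xt i := by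
  have hMlt : mm < N := by omega
  set M : Fin N := ⟨mm, hMlt⟩ with hM
  have hIio : ∀ j : Fin N, j ∈ Finset.Iio M ↔ (j : ℕ) < mm := by
    intro j; rw [Finset.mem_Iio]; exact Iff.rfl
  have hIci : ∀ j : Fin N, j ∈ Finset.Ici M ↔ mm ≤ (j : ℕ) := by
    intro j; rw [Finset.mem_Ici]; exact Iff.rfl
  set f : Fin N → ℝ := fun j => xt j * A i j with hf
  have hfj : ∀ j, f j = xt j * A i j := fun _ => rfl
  have hfi : f i = 0 := by rw [hfj, hA i i, if_pos rfl]; ring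
  have hsplit : ∑ j, f j = (∑ j ∈ Finset.Iio M, f j) + ∑ j ∈ Finset.Ici M, f j := by
    rw [← Finset.sum_filter_add_sum_filter_not Finset.univ (fun j : Fin N => (j : ℕ) < mm) f]
    congr 1
    · apply Finset.sum_congr _ (fun _ _ => rfl)
      ext j
      simp only [Finset.mem_filter, Finset.mem_univ, true_and, hIio j]
    · apply Finset.sum_congr _ (fun _ _ => rfl)
      ext j
      simp only [Finset.mem_filter, Finset.mem_univ, true_and, hIci j, not_lt]
  have hT : hopT A (fun _ : Fin 1 => fun _ => (1 : ℝ)) xt i = sgn (∑ j, f j) := by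
    simp [hopT, hfj]
  rw [hT, hxt i]
  have hMval : (M : ℕ) = mm := rfl
  by_cases hi : (i : ℕ) < mm
  · -- i in first clique
    rw [if_pos hi]
    have hiIio : i ∈ Finset.Iio M := (hIio i).2 hi
    have h1 : ∑ j ∈ Finset.Iio M, f j = -((mm : ℝ) - 1) := by
      rw [← Finset.add_sum_erase _ f hiIio]
      have hterm : ∀ j ∈ (Finset.Iio M).erase i, f j = -1 := by
        intro j hj
        have hjne : j ≠ i := Finset.ne_of_mem_erase hj
        have hjm : (j : ℕ) < mm := (hIio j).1 (Finset.mem_of_mem_erase hj)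
        rw [hfj, hxt j, hA i j, if_pos hjm, if_neg (fun h : i = j => hjne h.symm),
          if_pos (iff_of_true hi hjm)]
        ring
      rw [Finset.sum_congr rfl hterm, Finset.sum_const,
        Finset.card_erase_of_mem hiIio, Fin.card_Iio, hfi, hMval,
        nsmul_eq_mul, Nat.cast_sub (by omega : 1 ≤ mm)]
      push_cast; ring
    have hvIci : v ∈ Finset.Ici M := (hIci v).2 hv
    have h2 : ∑ j ∈ Finset.Ici M, f j ≤ 1 := by
      rw [← Finset.add_sum_erase _ f hvIci]
      have hz : ∀ j ∈ (Finset.Ici M).erase v, f j = 0 := by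
        intro j hj
        have hjne : j ≠ v := Finset.ne_of_mem_erase hj
        have hjm : mm ≤ (j : ℕ) := (hIci j).1 (Finset.mem_of_mem_erase hj)
        have hij : i ≠ j := fun h => by omega
        have hiv : i ≠ v := fun h => by rw [h] at hi; omega
        rw [hfj, hA i j, if_neg hij, if_neg (by intro h; omega),
          if_neg (by rintro ⟨_, (⟨_, hjv⟩ | ⟨hiv', _⟩)⟩; exacts [hjne hjv, hiv hiv'])]
        ring
      rw [Finset.sum_congr rfl hz, Finset.sum_const, smul_zero, add_zero]
      have hiv : i ≠ v := fun h => by rw [h] at hi; omega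
      rw [hfj, hA i v, if_neg hiv, if_neg (by intro h; omega), hxt v, if_neg (by omega)]
      split <;> norm_num
    have hmR : (3 : ℝ) ≤ (mm : ℝ) := by exact_mod_cast hm
    have hneg : ∑ j, f j < 0 := by rw [hsplit, h1]; linarith
    rw [sgn, if_neg (by linarith)]
  · -- i in second clique
    rw [if_neg hi]
    have hiIci : i ∈ Finset.Ici M := (hIci i).2 (by omega)
    have h1 : ∑ j ∈ Finset.Ici M, f j = (N : ℝ) - mm - 1 := by
      rw [← Finset.add_sum_erase _ f hiIci]
      have hterm : ∀ j ∈ (Finset.Ici M).erase i, f j = 1 := by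
        intro j hj
        have hjne : j ≠ i := Finset.ne_of_mem_erase hj
        have hjm : mm ≤ (j : ℕ) := (hIci j).1 (Finset.mem_of_mem_erase hj)
        rw [hfj, hxt j, hA i j, if_neg (show ¬ (j:ℕ) < mm by omega),
          if_neg (fun h : i = j => hjne h.symm), if_pos (iff_of_false hi (by omega))]
        ring
      rw [Finset.sum_congr rfl hterm, Finset.sum_const,
        Finset.card_erase_of_mem hiIci, Fin.card_Ici, hfi, hMval,
        nsmul_eq_mul, Nat.cast_sub (by omega : 1 ≤ N - mm), Nat.cast_sub (by omega : mm ≤ N)]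
      push_cast; ring
    have huIio : u ∈ Finset.Iio M := (hIio u).2 hu
    have h2 : -1 ≤ ∑ j ∈ Finset.Iio M, f j := by
      rw [← Finset.add_sum_erase _ f huIio]
      have hz : ∀ j ∈ (Finset.Iio M).erase u, f j = 0 := by
        intro j hj
        have hjne : j ≠ u := Finset.ne_of_mem_erase hj
        have hjm : (j : ℕ) < mm := (hIio j).1 (Finset.mem_of_mem_erase hj)
        have hij : i ≠ j := fun h => by omega
        have hiu : i ≠ u := fun h => by rw [h] at hi; omega
        rw [hfj, hA i j, if_neg hij, if_neg (by intro h; omega),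
          if_neg (by rintro ⟨_, (⟨hiu', _⟩ | ⟨_, hju⟩)⟩; exacts [hiu hiu', hjne hju])]
        ring
      rw [Finset.sum_congr rfl hz, Finset.sum_const, smul_zero, add_zero]
      have hiu : i ≠ u := fun h => by rw [h] at hi; omega
      rw [hfj, hA i u, if_neg hiu, if_neg (by intro h; omega), hxt u, if_pos hu]
      split <;> norm_num
    have hmR : ((mm : ℝ)) + 2 ≤ (N : ℝ) := by exact_mod_cast hmN
    have hpos : (0:ℝ) ≤ ∑ j, f j := by rw [hsplit, h1]; linarith
    rw [sgn, if_pos hpos]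

/-- on the union of two cliques `K_m` (vertices `< m`) and `K_{N−m}`
(vertices `≥ m`), with `log N ≪ m ≪ N`, possibly joined by one edge `{u,v}`, storing
the single pattern `ξ¹ ≡ 1`, the corrupted input `x̃` (equal to `−1` on the first
clique and `+1` on the second) is a fixed point of the parallel dynamics `T`, so the
retrieval dynamics cannot correct the `m` errors. -/
theorem two_cliques_no_error_correction (m : ℕ → ℕ)
    (hlog : Filter.Tendsto (fun N : ℕ => (m N : ℝ) / Real.log N) Filter.atTop Filter.atTop)
    (hN : Filter.Tendsto (fun N : ℕ => (m N : ℝ) / N) Filter.atTop (nhds 0)) :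
    ∀ᶠ N : ℕ in Filter.atTop,
      ∀ u v : Fin N, (u : ℕ) < m N → m N ≤ (v : ℕ) →
      ∀ ex : Bool,
      ∀ A : Matrix (Fin N) (Fin N) ℝ,
        (∀ i j, A i j =
          if i = j then 0
          else if ((i : ℕ) < m N ↔ (j : ℕ) < m N) then 1
          else if ex = true ∧ ((i = u ∧ j = v) ∨ (i = v ∧ j = u)) then 1 else 0) →
      ∀ xt : Fin N → ℝ, (∀ i, xt i = if (i : ℕ) < m N then -1 else 1) →
      ∀ i, hopT A (fun _ : Fin 1 => fun _ => (1 : ℝ)) xt i = xt i := by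
  have hlog1 : ∀ᶠ N : ℕ in Filter.atTop, (1 : ℝ) ≤ Real.log N :=
    (Real.tendsto_log_atTop.comp tendsto_natCast_atTop_atTop).eventually_ge_atTop 1
  have hlog3 : ∀ᶠ N : ℕ in Filter.atTop, (3 : ℝ) ≤ (m N : ℝ) / Real.log N :=
    hlog.eventually_ge_atTop 3
  have hhalf : ∀ᶠ N : ℕ in Filter.atTop, (m N : ℝ) / N < 1/2 :=
    hN.eventually (gt_mem_nhds (show (0:ℝ) < 1/2 by norm_num))
  have hN1 : ∀ᶠ N : ℕ in Filter.atTop, 1 ≤ N := Filter.eventually_atTop.2 ⟨1, fun _ h => h⟩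
  filter_upwards [hlog1, hlog3, hhalf, hN1] with N h1 h3 hh hN1
  have hNpos : (0:ℝ) < N := by exact_mod_cast hN1
  have hlogpos : (0:ℝ) < Real.log N := by linarith
  have hm3 : 3 ≤ m N := by
    have hle : (m N : ℝ) / Real.log N ≤ (m N : ℝ) :=
      div_le_self (by positivity) h1
    have : (3:ℝ) ≤ (m N : ℝ) := by linarith
    exact_mod_cast this
  have hmN2 : m N + 2 ≤ N := by
    have h2m : (m N : ℝ) * 2 < N := by
      rw [div_lt_iff₀ hNpos] at hh; linarith
    have hm3R : (3:ℝ) ≤ (m N : ℝ) := by exact_mod_cast hm3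
    have : (m N : ℝ) + 2 ≤ (N : ℝ) := by linarith
    exact_mod_cast this
  intro u v hu hv ex A hA xt hxt i
  exact two_cliques_key N (m N) hm3 hmN2 u v hu hv ex A hA xt hxt i
end

section
/- Let (x_n) satisfy x_{n+1} = c·x_n·h(x_n) with c > 0, where h(x) = −x·log x − (1−x)·log(1−x). If x₀ ∈ (0,1/2] is small enough, then x_{n+1} ≤ (C·x_n)^{3/2} for some constant C > 0 (using h(x) ≤ −2x·log x ≤ 2√x on [0,1/2]), hence x_n ≤ (C³·x₀)^{(3/2)^n}, and consequently x_n < 1/N whenever n ≥ c₂·log log N for some constant c₂ > 0. -/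
/-- The entropy function `h(x) = −x log x − (1−x) log(1−x)`. -/
noncomputable def ent (x : ℝ) : ℝ := -x * Real.log x - (1 - x) * Real.log (1 - x)

lemma ent_le_two_sqrt {x : ℝ} (hx : 0 < x) (hx2 : x ≤ 1 / 2) :
    ent x ≤ 2 * Real.sqrt x := by
  have h1x : 0 < 1 - x := by linarith
  have hs : 0 < Real.sqrt x := Real.sqrt_pos.mpr hx
  -- Part A : -(1-x) log(1-x) ≤ x
  have hA : -((1 - x) * Real.log (1 - x)) ≤ x := by
    have h := Real.log_le_sub_one_of_pos (inv_pos.mpr h1x)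
    rw [Real.log_inv] at h
    have h' : -Real.log (1 - x) * (1 - x) ≤ ((1 - x)⁻¹ - 1) * (1 - x) :=
      mul_le_mul_of_nonneg_right h h1x.le
    have : ((1 - x)⁻¹ - 1) * (1 - x) = x := by field_simp; ring
    nlinarith
  -- Part B : -x log x ≤ 2√x - 2x
  have hB : -(x * Real.log x) ≤ 2 * Real.sqrt x - 2 * x := by
    have h := Real.log_le_sub_one_of_pos (inv_pos.mpr hs)
    rw [Real.log_inv] at h
    have hlog : Real.log (Real.sqrt x) = Real.log x / 2 := Real.log_sqrt hx.le
    have h' : -Real.log (Real.sqrt x) * (2 * x) ≤ ((Real.sqrt x)⁻¹ - 1) * (2 * x) :=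
      mul_le_mul_of_nonneg_right h (by linarith)
    have hdiv : x / Real.sqrt x = Real.sqrt x := Real.div_sqrt
    have hx' : ((Real.sqrt x)⁻¹ - 1) * (2 * x) = 2 * Real.sqrt x - 2 * x := by
      rw [inv_eq_one_div]
      field_simp
      nlinarith [Real.sq_sqrt hx.le]
    rw [hx'] at h'
    nlinarith [hlog]
  unfold ent
  nlinarith

/-- for the sequence `x_{n+1} = c·x_n·h(x_n)` with values in `(0,1/2]`
and `x₀` small enough, one has `x_{n+1} ≤ (C·x_n)^{3/2}` for some `C > 0`, hence
`x_n ≤ (C³·x₀)^{(3/2)^n}`, and consequently `x_n < 1/N` whenever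
`n ≥ c₂·log log N`, for some constant `c₂ > 0`. -/
theorem x_sequence (c : ℝ) (hc : 0 < c) :
    ∃ ε > (0 : ℝ), ∃ C > (0 : ℝ), ∃ c₂ > (0 : ℝ),
      ∀ x : ℕ → ℝ, (∀ n, 0 < x n ∧ x n ≤ 1 / 2) →
        (∀ n, x (n + 1) = c * x n * ent (x n)) → x 0 ≤ ε →
        (∀ n, x (n + 1) ≤ (C * x n) ^ ((3 : ℝ) / 2)) ∧
        (∀ n : ℕ, x n ≤ (C ^ 3 * x 0) ^ (((3 : ℝ) / 2) ^ n)) ∧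
        ∀ N : ℕ, 2 ≤ N → ∀ n : ℕ, (n : ℝ) ≥ c₂ * Real.log (Real.log N) → x n < 1 / N := by
  set C : ℝ := max 1 (2 * c) with hCdef
  have hC1 : 1 ≤ C := le_max_left _ _
  have hCpos : 0 < C := lt_of_lt_of_le one_pos hC1
  have hC2c : 2 * c ≤ C := le_max_right _ _
  have hC32 : 2 * c ≤ C ^ ((3 : ℝ) / 2) := by
    calc 2 * c ≤ C := hC2c
      _ = C ^ (1 : ℝ) := (Real.rpow_one C).symm
      _ ≤ C ^ ((3 : ℝ) / 2) := Real.rpow_le_rpow_of_exponent_le hC1 (by norm_num)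
  have hC3 : 1 ≤ C ^ 3 := one_le_pow₀ hC1
  have hlog32 : 0 < Real.log (3 / 2) := Real.log_pos (by norm_num)
  refine ⟨Real.exp (-2) / C ^ 3, by positivity, C, hCpos, (Real.log (3 / 2))⁻¹,
    by positivity, ?_⟩
  intro x hx hrec hx0
  -- first claim
  have key1 : ∀ n, x (n + 1) ≤ (C * x n) ^ ((3 : ℝ) / 2) := by
    intro n
    obtain ⟨hp, hh⟩ := hx n
    have hent := ent_le_two_sqrt hp hh
    have hsq : x n ^ ((3 : ℝ) / 2) = x n * Real.sqrt (x n) := by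
      rw [show ((3 : ℝ) / 2) = 1 + 1 / 2 by norm_num, Real.rpow_add hp, Real.rpow_one,
        ← Real.sqrt_eq_rpow]
    rw [hrec n, Real.mul_rpow hCpos.le hp.le, hsq]
    have h1 : c * x n * ent (x n) ≤ c * x n * (2 * Real.sqrt (x n)) :=
      mul_le_mul_of_nonneg_left hent (mul_nonneg hc.le hp.le)
    have hxs : (0 : ℝ) ≤ x n * Real.sqrt (x n) := mul_nonneg hp.le (Real.sqrt_nonneg _)
    nlinarith [mul_le_mul_of_nonneg_right hC32 hxs]
  have hu0pos : 0 < C ^ 3 * x 0 := mul_pos (by positivity) (hx 0).1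
  have hu0 : C ^ 3 * x 0 ≤ Real.exp (-2) := by
    have h := mul_le_mul_of_nonneg_left hx0 (by positivity : (0 : ℝ) ≤ C ^ 3)
    calc C ^ 3 * x 0 ≤ C ^ 3 * (Real.exp (-2) / C ^ 3) := h
      _ = Real.exp (-2) := by field_simp
  -- second claim (strengthened)
  have key2 : ∀ n, C ^ 3 * x n ≤ (C ^ 3 * x 0) ^ (((3 : ℝ) / 2) ^ n) := by
    intro n
    induction n with
    | zero => simp
    | succ n ih =>
      have hp := (hx n).1
      have hpow : ((C ^ 3 : ℝ)) ^ ((3 : ℝ) / 2) = C ^ 3 * C ^ ((3 : ℝ) / 2) := by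
        rw [← Real.rpow_natCast C 3, ← Real.rpow_mul hCpos.le, ← Real.rpow_add hCpos]
        norm_num
      have step : C ^ 3 * x (n + 1) ≤ (C ^ 3 * x n) ^ ((3 : ℝ) / 2) := by
        have h1 : C ^ 3 * x (n + 1) ≤ C ^ 3 * (C * x n) ^ ((3 : ℝ) / 2) :=
          mul_le_mul_of_nonneg_left (key1 n) (by positivity)
        have h2 : C ^ 3 * (C * x n) ^ ((3 : ℝ) / 2) = (C ^ 3 * x n) ^ ((3 : ℝ) / 2) := by
          rw [Real.mul_rpow hCpos.le hp.le, Real.mul_rpow (by positivity : (0:ℝ) ≤ C ^ 3) hp.le,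
            hpow]
          ring
        linarith [h2 ▸ h1]
      calc C ^ 3 * x (n + 1) ≤ (C ^ 3 * x n) ^ ((3 : ℝ) / 2) := step
        _ ≤ ((C ^ 3 * x 0) ^ (((3 : ℝ) / 2) ^ n)) ^ ((3 : ℝ) / 2) :=
          Real.rpow_le_rpow (mul_nonneg (by positivity) hp.le) ih (by norm_num)
        _ = (C ^ 3 * x 0) ^ (((3 : ℝ) / 2) ^ (n + 1)) := by
          rw [← Real.rpow_mul hu0pos.le, ← pow_succ]
  have key2' : ∀ n : ℕ, x n ≤ (C ^ 3 * x 0) ^ (((3 : ℝ) / 2) ^ n) := by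
    intro n
    have hp := (hx n).1
    nlinarith [key2 n]
  refine ⟨key1, key2', ?_⟩
  -- third claim
  intro N hN n hn
  have hN1 : (1 : ℝ) < (N : ℝ) := by exact_mod_cast Nat.lt_of_lt_of_le one_lt_two hN
  have hlogN : 0 < Real.log N := Real.log_pos hN1
  set t : ℝ := ((3 : ℝ) / 2) ^ n with ht
  have ht1 : (1 : ℝ) ≤ t := one_le_pow₀ (by norm_num)
  have hLn : Real.log (Real.log N) ≤ (n : ℝ) * Real.log (3 / 2) := by
    rw [ge_iff_le, inv_mul_le_iff₀ hlog32] at hn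
    linarith [hn]
  have htlog : Real.log N ≤ t := by
    have h1 : Real.log N = Real.exp (Real.log (Real.log N)) := (Real.exp_log hlogN).symm
    have h2 : Real.exp ((n : ℝ) * Real.log (3 / 2)) = t := by
      rw [Real.exp_nat_mul, Real.exp_log (by norm_num : (0:ℝ) < 3 / 2)]
    rw [h1, ← h2]
    exact Real.exp_le_exp.mpr hLn
  have hxt : x n ≤ Real.exp (-2 * t) := by
    have h1 : (C ^ 3 * x 0) ^ t ≤ Real.exp (-2) ^ t :=
      Real.rpow_le_rpow hu0pos.le hu0 (by linarith)
    have h2 : Real.exp (-2) ^ t = Real.exp (-2 * t) := (Real.exp_mul (-2) t).symm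
    calc x n ≤ (C ^ 3 * x 0) ^ t := key2' n
      _ ≤ Real.exp (-2) ^ t := h1
      _ = Real.exp (-2 * t) := h2
  have hfin : Real.exp (-2 * t) < 1 / (N : ℝ) := by
    have h1 : Real.exp (-2 * t) < Real.exp (-t) := Real.exp_lt_exp.mpr (by linarith)
    have h2 : Real.exp (-t) ≤ Real.exp (-Real.log N) := Real.exp_le_exp.mpr (by linarith)
    have h3 : Real.exp (-Real.log N) = 1 / (N : ℝ) := by
      rw [Real.exp_neg, Real.exp_log (by linarith : (0:ℝ) < (N:ℝ))]
      rw [one_div]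
    linarith [h3 ▸ h2]
  linarith
end
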